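/- Let G be a surjunctive group and K a field (or more generally, suppose for each finite alphabet injective CA over G are surjective). Let τ, σ : (K^n)^G → (K^n)^G be linear cellular automata (cellular automata whose local defining maps are K-linear) with σ ∘ τ = Id, where K is algebraically closed. Then τ ∘ σ = Id. -/

import Mathlib

/-- A cellular automaton over group `G` and alphabet `A`. -/
def IsCellularAutomaton (G : Type) [Group G] (A : Type) (τ : (G → A) → (G → A)) : Prop :=
  ∃ (M : Finset G) (μ : (M → A) → A), ∀ (c : G → A) (g : G),
    τ c g = μ fun m : M => c (g * (m : G))

/-- A group is surjunctive if every injective cellular automaton with finite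
alphabet over it is surjective. -/
def Surjunctive (G : Type) [Group G] : Prop :=
  ∀ (A : Type) [Finite A] (τ : (G → A) → (G → A)),
    IsCellularAutomaton G A τ → Function.Injective τ → Function.Surjective τ

/-- A linear cellular automaton over `G` with alphabet the `K`-vector space
`K^n`: a cellular automaton admitting a finite memory set and a `K`-linear
local defining map. -/
def IsLinearCellularAutomaton (G : Type) [Group G] (K : Type) [Field K] (n : ℕ)
    (τ : (G → (Fin n → K)) → (G → (Fin n → K))) : Prop :=
  ∃ (M : Finset G) (μ : ((M → (Fin n → K)) →ₗ[K] (Fin n → K))),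
    ∀ (c : G → (Fin n → K)) (g : G), τ c g = μ fun m : M => c (g * (m : G))

lemma int_isJacobsonRing : IsJacobsonRing ℤ := by
  rw [isJacobsonRing_iff_prime_eq]
  intro P hP
  rcases eq_or_ne P ⊥ with rfl | hne
  · refine le_antisymm ?_ Ideal.le_jacobson
    intro x hx
    by_contra hx0
    have hx0' : x ≠ 0 := by simpa using hx0
    obtain ⟨p, hple, hp⟩ := Nat.exists_infinite_primes (x.natAbs + 1)
    have hmax : (Ideal.span {(p : ℤ)}).IsMaximal :=
      PrincipalIdealRing.isMaximal_of_irreducible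
        (Int.prime_iff_natAbs_prime.mpr (by simpa using hp)).irreducible
    have hxp : x ∈ Ideal.span {(p : ℤ)} := by
      rw [Ideal.jacobson, Ideal.mem_sInf] at hx
      exact hx ⟨bot_le, hmax⟩
    rw [Ideal.mem_span_singleton] at hxp
    have : p ∣ x.natAbs := by have := Int.natAbs_dvd_natAbs.mpr hxp; simpa using this
    have := Nat.le_of_dvd (Int.natAbs_pos.mpr hx0') this
    omega
  · have hmax : P.IsMaximal := IsPrime.to_maximal_ideal hne
    exact le_antisymm (sInf_le ⟨le_refl _, hmax⟩) Ideal.le_jacobson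

lemma finite_of_field_of_moduleFiniteInt (F : Type*) [Field F] [Module.Finite ℤ F] :
    Finite F := by
  rcases CharP.char_is_prime_or_zero F (ringChar F) with hp | h0
  · apply Module.finite_of_fg_torsion
    intro x
    refine ⟨⟨(ringChar F : ℤ), mem_nonZeroDivisors_of_ne_zero (by exact_mod_cast hp.ne_zero)⟩, ?_⟩
    have : ((ringChar F : ℤ) : F) = 0 := by
      have := ringChar.charP F
      exact_mod_cast CharP.cast_eq_zero F (ringChar F)
    simp [zsmul_eq_mul, this]
  · haveI : CharP F 0 := h0 ▸ ringChar.charP F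
    haveI : CharZero F := CharP.charP_to_charZero F
    exfalso
    have hinj : Function.Injective (algebraMap ℚ F) := (algebraMap ℚ F).injective
    let f : ℚ →ₗ[ℤ] F := (algebraMap ℚ F).toAddMonoidHom.toIntLinearMap
    haveI : IsNoetherian ℤ F := isNoetherian_of_isNoetherianRing_of_finite ℤ F
    have hfg : (LinearMap.range f).FG := IsNoetherian.noetherian _
    haveI : Module.Finite ℤ (LinearMap.range f) := Module.Finite.iff_fg.mpr hfg
    haveI : Module.Finite ℤ ℚ :=
      Module.Finite.equiv (LinearEquiv.ofInjective f (by exact hinj)).symm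
    haveI : Algebra.IsIntegral ℤ ℚ := Algebra.IsIntegral.of_finite ℤ ℚ
    obtain ⟨y, hy⟩ := IsIntegrallyClosed.isIntegral_iff.mp
      (Algebra.IsIntegral.isIntegral (R := ℤ) ((1 : ℚ)/2))
    have : ((2 * y : ℤ) : ℚ) = 1 := by
      push_cast
      rw [show ((y : ℚ)) = 1/2 from hy]
      ring
    have : (2 * y : ℤ) = 1 := by exact_mod_cast this
    omega


section Tmap

variable {G : Type} [Group G] {S T : Type*} [CommRing S] [CommRing T] {n : ℕ}

/-- The linear CA associated to an element of the matrix monoid algebra. -/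
def Tmap (a : MonoidAlgebra (Matrix (Fin n) (Fin n) S) G) (c : G → Fin n → S) :
    G → Fin n → S :=
  fun g => a.coeff.sum fun m A => A.mulVec (c (g * m))

lemma Tmap_single (m : G) (A : Matrix (Fin n) (Fin n) S) (c : G → Fin n → S) :
    Tmap (MonoidAlgebra.single m A) c = fun g => A.mulVec (c (g * m)) := by
  funext g
  exact Finsupp.sum_single_index (by simp [Matrix.zero_mulVec])

lemma Tmap_zero (c : G → Fin n → S) : Tmap (0 : MonoidAlgebra (Matrix (Fin n) (Fin n) S) G) c = 0 := by
  funext g; simp [Tmap]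

lemma Tmap_add (a b : MonoidAlgebra (Matrix (Fin n) (Fin n) S) G) (c : G → Fin n → S) :
    Tmap (a + b) c = Tmap a c + Tmap b c := by
  funext g
  simp only [Tmap, MonoidAlgebra.coeff_add, Pi.add_apply]
  exact Finsupp.sum_add_index' (fun _ => by simp [Matrix.zero_mulVec])
    (fun _ _ _ => by simp [Matrix.add_mulVec])

lemma Tmap_one (c : G → Fin n → S) :
    Tmap (1 : MonoidAlgebra (Matrix (Fin n) (Fin n) S) G) c = c := by
  funext g
  rw [MonoidAlgebra.one_def, Tmap_single]
  simp

lemma Tmap_mul (a b : MonoidAlgebra (Matrix (Fin n) (Fin n) S) G) (c : G → Fin n → S) :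
    Tmap (a * b) c = Tmap a (Tmap b c) := by
  induction a using MonoidAlgebra.induction_linear with
  | zero => simp [Tmap_zero]
  | add a₁ a₂ h1 h2 => rw [add_mul, Tmap_add, Tmap_add, h1, h2]
  | single m A =>
    induction b using MonoidAlgebra.induction_linear with
    | zero => simp [Tmap_zero, Tmap_single, Matrix.mulVec_zero]; rfl
    | add b₁ b₂ h1 h2 =>
      rw [mul_add, Tmap_add, h1, h2, Tmap_add, Tmap_single, Tmap_single, Tmap_single]
      funext g
      simp [Matrix.mulVec_add]
    | single k B =>
      rw [MonoidAlgebra.single_mul_single, Tmap_single, Tmap_single, Tmap_single]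
      funext g
      simp only []
      rw [← Matrix.mulVec_mulVec, mul_assoc]

lemma Tmap_injective :
    Function.Injective (Tmap (G := G) (S := S) (n := n)) := by
  classical
  intro a b hab
  ext h i j
  have key : ∀ v : Fin n → S, (a.coeff h).mulVec v = (b.coeff h).mulVec v := by
    intro v
    have hc := congrFun (congrFun hab (fun g' => if g' = h then v else 0)) 1
    have expand : ∀ d : MonoidAlgebra (Matrix (Fin n) (Fin n) S) G,
        Tmap d (fun g' => if g' = h then v else 0) 1 = (d.coeff h).mulVec v := by
      intro d
      show (d.coeff.sum fun m A => A.mulVec (if 1 * m = h then v else 0)) = _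
      have : ∀ m (A : Matrix (Fin n) (Fin n) S),
          A.mulVec (if 1 * m = h then v else 0) = if m = h then A.mulVec v else 0 := by
        intro m A
        simp only [one_mul]
        split <;> simp [Matrix.mulVec_zero]
      refine Eq.trans (Finsupp.sum_congr
        (g2 := fun m A => if m = h then A.mulVec v else 0) (fun m _ => this m (d.coeff m))) ?_
      rw [Finsupp.sum_ite_eq' d.coeff h (fun m A => A.mulVec v)]
      split
      · rfl
      · next hh => rw [Finsupp.notMem_support_iff.mp hh, Matrix.zero_mulVec]
    rw [expand a, expand b] at hc
    exact hc
  have := congrFun (key (Pi.single j 1)) i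
  simpa [Matrix.mulVec_single] using this

lemma Tmap_finsetSum {ι : Type*} (s : Finset ι)
    (f : ι → MonoidAlgebra (Matrix (Fin n) (Fin n) S) G) (c : G → Fin n → S) :
    Tmap (∑ i ∈ s, f i) c = ∑ i ∈ s, Tmap (f i) c := by
  induction s using Finset.cons_induction with
  | empty => simp [Tmap_zero]
  | cons i s hi ih => rw [Finset.sum_cons, Finset.sum_cons, Tmap_add, ih]

/-- Coefficientwise ring-hom mapping of matrix monoid algebras. -/
noncomputable def Pmap (ψ : S →+* T) (a : MonoidAlgebra (Matrix (Fin n) (Fin n) S) G) :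
    MonoidAlgebra (Matrix (Fin n) (Fin n) T) G :=
  MonoidAlgebra.ofCoeff (Finsupp.mapRange (fun A => A.map ψ) (by simp [Matrix.map_zero]) a.coeff)

lemma Pmap_apply (ψ : S →+* T) (a : MonoidAlgebra (Matrix (Fin n) (Fin n) S) G) (g : G) :
    (Pmap ψ a).coeff g = (a.coeff g).map ψ := rfl

lemma Pmap_single (ψ : S →+* T) (m : G) (A : Matrix (Fin n) (Fin n) S) :
    Pmap ψ (MonoidAlgebra.single m A) = MonoidAlgebra.single m (A.map ψ) :=
  congrArg MonoidAlgebra.ofCoeff Finsupp.mapRange_single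

lemma Pmap_zero (ψ : S →+* T) :
    Pmap ψ (0 : MonoidAlgebra (Matrix (Fin n) (Fin n) S) G) = 0 := by
  ext g i j
  simp [Pmap_apply, Matrix.map_apply]

lemma Pmap_add (ψ : S →+* T) (a b : MonoidAlgebra (Matrix (Fin n) (Fin n) S) G) :
    Pmap ψ (a + b) = Pmap ψ a + Pmap ψ b := by
  ext g i j
  show ψ ((a.coeff g + b.coeff g) i j) = ((Pmap ψ a).coeff g + (Pmap ψ b).coeff g) i j
  simp [Pmap_apply, Matrix.map_apply, Matrix.add_apply]

lemma Pmap_one (ψ : S →+* T) :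
    Pmap ψ (1 : MonoidAlgebra (Matrix (Fin n) (Fin n) S) G) = 1 := by
  rw [MonoidAlgebra.one_def, MonoidAlgebra.one_def, Pmap_single]
  congr 1
  ext i j
  simp [Matrix.map_apply, Matrix.one_apply, apply_ite ψ]

lemma Pmap_mul (ψ : S →+* T) (a b : MonoidAlgebra (Matrix (Fin n) (Fin n) S) G) :
    Pmap ψ (a * b) = Pmap ψ a * Pmap ψ b := by
  induction a using MonoidAlgebra.induction_linear with
  | zero => rw [zero_mul, Pmap_zero, zero_mul]
  | add a₁ a₂ h1 h2 => rw [add_mul, Pmap_add, h1, h2, Pmap_add, add_mul]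
  | single m A =>
    induction b using MonoidAlgebra.induction_linear with
    | zero => rw [mul_zero, Pmap_zero, mul_zero]
    | add b₁ b₂ h1 h2 => rw [mul_add, Pmap_add, h1, h2, Pmap_add, mul_add]
    | single k B =>
      rw [MonoidAlgebra.single_mul_single, Pmap_single, Pmap_single, Pmap_single,
        MonoidAlgebra.single_mul_single]
      congr 1
      ext i j
      simp [Matrix.map_apply, Matrix.mul_apply, map_sum]

lemma Pmap_sub (ψ : S →+* T) (a b : MonoidAlgebra (Matrix (Fin n) (Fin n) S) G) :
    Pmap ψ (a - b) = Pmap ψ a - Pmap ψ b := by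
  ext g i j
  show ψ ((a.coeff g - b.coeff g) i j) = ((Pmap ψ a).coeff g - (Pmap ψ b).coeff g) i j
  simp [Pmap_apply, Matrix.map_apply, Matrix.sub_apply, map_sub]

lemma Pmap_injective (ψ : S →+* T) (hψ : Function.Injective ψ) :
    Function.Injective (Pmap (G := G) (n := n) ψ) := by
  intro a b hab
  ext g i j
  have := congrFun (congrFun (congrArg (fun d => d.coeff g) hab) i) j
  exact hψ this

end Tmap

section Repr

variable {G : Type} [Group G] {K : Type} [Field K] {n : ℕ}

open scoped Classical in
lemma mu_decomp (M : Finset G) (μ : ((M → (Fin n → K)) →ₗ[K] (Fin n → K)))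
    (f : M → (Fin n → K)) :
    μ f = ∑ m ∈ M.attach,
      (Matrix.of fun i j => μ (Pi.single m (Pi.single j 1)) i).mulVec (f m) := by
  classical
  rw [← Finset.univ_eq_attach]
  have h1 : f = ∑ m : M, Pi.single m (f m) := (Finset.univ_sum_single f).symm
  conv_lhs => rw [h1]
  rw [map_sum]
  refine Finset.sum_congr rfl fun m _ => ?_
  have h2 : μ (Pi.single (M := fun _ : M => Fin n → K) m (f m)) =
      (μ.comp (LinearMap.single K (fun _ : M => Fin n → K) m)) (f m) := rfl
  rw [h2, LinearMap.pi_apply_eq_sum_univ]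
  funext i
  rw [Finset.sum_apply]
  simp only [Matrix.mulVec, Matrix.of_apply, dotProduct]
  refine Finset.sum_congr rfl fun j _ => ?_
  have h3 : (fun j' => if j = j' then (1:K) else 0) = Pi.single j 1 := by
    funext j'; simp [Pi.single_apply, eq_comm]
  simp only [Pi.smul_apply, smul_eq_mul, h3]
  rw [mul_comm]
  rfl

lemma exists_repr (τ : (G → (Fin n → K)) → (G → (Fin n → K)))
    (hτ : IsLinearCellularAutomaton G K n τ) :
    ∃ a : MonoidAlgebra (Matrix (Fin n) (Fin n) K) G, τ = Tmap a := by
  classical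
  obtain ⟨M, μ, hμ⟩ := hτ
  refine ⟨∑ m ∈ M.attach, MonoidAlgebra.single (m : G)
      (Matrix.of fun i j => μ (Pi.single m (Pi.single j 1)) i), ?_⟩
  funext c g
  rw [hμ, Tmap_finsetSum, mu_decomp, Finset.sum_apply]
  refine Finset.sum_congr rfl fun m _ => ?_
  rw [Tmap_single]

end Repr

section CA

variable {G : Type} [Group G] {S : Type} [CommRing S] {n : ℕ}

lemma Tmap_isCA (a : MonoidAlgebra (Matrix (Fin n) (Fin n) S) G) :
    IsCellularAutomaton G (Fin n → S) (Tmap a) := by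
  classical
  refine ⟨a.coeff.support, fun f => ∑ m ∈ a.coeff.support.attach, (a.coeff m).mulVec (f m), fun c g => ?_⟩
  show (a.coeff.sum fun m A => A.mulVec (c (g * m))) = _
  rw [Finsupp.sum]
  rw [← Finset.sum_attach a.coeff.support (fun m => (a.coeff m).mulVec (c (g * m)))]

end CA

set_option maxHeartbeats 2000000 in
/-- Over a surjunctive group, left invertible linear cellular automata over an
algebraically closed field are invertible: `σ ∘ τ = Id` implies `τ ∘ σ = Id`. -/
theorem linearCellularAutomaton_directly_finite {G : Type} [Group G]
    (hG : Surjunctive G) {K : Type} [Field K] [IsAlgClosed K] (n : ℕ)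
    (τ σ : (G → (Fin n → K)) → (G → (Fin n → K)))
    (hτ : IsLinearCellularAutomaton G K n τ)
    (hσ : IsLinearCellularAutomaton G K n σ)
    (h : σ ∘ τ = id) : τ ∘ σ = id := by
  classical
  obtain ⟨a, ha⟩ := exists_repr τ hτ
  obtain ⟨b, hb⟩ := exists_repr σ hσ
  have hba : b * a = 1 := by
    apply Tmap_injective
    funext c
    rw [Tmap_mul, ← hb, ← ha, Tmap_one]
    exact congrFun h c
  suffices hab : a * b = 1 by
    funext c
    show τ (σ c) = c
    rw [ha, hb, ← Tmap_mul, hab, Tmap_one]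
  by_contra hne
  set d := a * b - 1 with hd_def
  have hd : d ≠ 0 := sub_ne_zero.mpr hne
  obtain ⟨g₀, hg₀⟩ : ∃ g, d.coeff g ≠ 0 := by
    by_contra h'
    push_neg at h'
    exact hd (MonoidAlgebra.coeff_injective (Finsupp.ext h'))
  obtain ⟨i₀, j₀, hx⟩ : ∃ i j, d.coeff g₀ i j ≠ 0 := by
    by_contra h'
    push_neg at h'
    exact hg₀ (Matrix.ext fun i j => by simpa using h' i j)
  set x : K := d.coeff g₀ i₀ j₀ with hx_def
  -- the finitely generated subring
  set E : Finset K :=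
    ((a.coeff.support ×ˢ (Finset.univ : Finset (Fin n)) ×ˢ Finset.univ).image
      fun p => a.coeff p.1 p.2.1 p.2.2) ∪
    ((b.coeff.support ×ˢ (Finset.univ : Finset (Fin n)) ×ˢ Finset.univ).image
      fun p => b.coeff p.1 p.2.1 p.2.2) ∪ {x⁻¹} with hE_def
  set R : Subalgebra ℤ K := Algebra.adjoin ℤ (E : Set K) with hR_def
  have ha_mem : ∀ g i j, a.coeff g i j ∈ R := by
    intro g i j
    by_cases hg : g ∈ a.coeff.support
    · apply Algebra.subset_adjoin
      simp only [hE_def, Finset.coe_union, Set.mem_union, Finset.coe_image, Finset.coe_singleton]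
      exact Or.inl (Or.inl ⟨(g, i, j), by simp [hg], rfl⟩)
    · rw [Finsupp.notMem_support_iff.mp hg]
      simpa using Subalgebra.zero_mem R
  have hb_mem : ∀ g i j, b.coeff g i j ∈ R := by
    intro g i j
    by_cases hg : g ∈ b.coeff.support
    · apply Algebra.subset_adjoin
      simp only [hE_def, Finset.coe_union, Set.mem_union, Finset.coe_image, Finset.coe_singleton]
      exact Or.inl (Or.inr ⟨(g, i, j), by simp [hg], rfl⟩)
    · rw [Finsupp.notMem_support_iff.mp hg]
      simpa using Subalgebra.zero_mem R
  have hxinv_mem : x⁻¹ ∈ R := by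
    apply Algebra.subset_adjoin
    simp only [hE_def, Finset.coe_union, Set.mem_union, Finset.coe_singleton]
    exact Or.inr rfl
  -- lift a and b to R
  set e : K → R := fun y => if h : y ∈ R then (⟨y, h⟩ : R) else 0 with he_def
  have he : ∀ y : K, y ∈ R → ((e y : R) : K) = y := by
    intro y hy
    simp [he_def, dif_pos hy]
  have he0 : e 0 = 0 := by
    apply Subtype.ext
    rw [he 0 (Subalgebra.zero_mem R)]
    rfl
  set a' : MonoidAlgebra (Matrix (Fin n) (Fin n) R) G :=
    MonoidAlgebra.ofCoeff (Finsupp.mapRange (fun A => A.map e) (by ext i j; simp [Matrix.map_apply, he0]) a.coeff) with ha'_def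
  set b' : MonoidAlgebra (Matrix (Fin n) (Fin n) R) G :=
    MonoidAlgebra.ofCoeff (Finsupp.mapRange (fun A => A.map e) (by ext i j; simp [Matrix.map_apply, he0]) b.coeff) with hb'_def
  have hPa : Pmap (R.val : R →+* K) a' = a := by
    ext g i j
    show ((a'.coeff g).map (R.val : R →+* K)) i j = a.coeff g i j
    simp only [ha'_def, MonoidAlgebra.coeff_ofCoeff, Finsupp.mapRange_apply, Matrix.map_apply, Matrix.map_map]
    exact he _ (ha_mem g i j)
  have hPb : Pmap (R.val : R →+* K) b' = b := by
    ext g i j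
    show ((b'.coeff g).map (R.val : R →+* K)) i j = b.coeff g i j
    simp only [hb'_def, MonoidAlgebra.coeff_ofCoeff, Finsupp.mapRange_apply, Matrix.map_apply, Matrix.map_map]
    exact he _ (hb_mem g i j)
  -- b' * a' = 1 in the R-coefficient algebra
  have hba' : b' * a' = 1 := by
    apply Pmap_injective (R.val : R →+* K) Subtype.val_injective
    rw [Pmap_mul, hPa, hPb, hba, Pmap_one]
  -- finite residue field
  haveI : Nontrivial R := ⟨⟨0, 1, fun h' => zero_ne_one (congrArg Subtype.val h')⟩⟩
  haveI hJac : IsJacobsonRing ℤ := int_isJacobsonRing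
  haveI hFT : Algebra.FiniteType ℤ R :=
    (Subalgebra.fg_iff_finiteType _).mp (Subalgebra.fg_adjoin_finset E)
  obtain ⟨I, hI⟩ := Ideal.exists_maximal R
  haveI := hI
  letI F := R ⧸ I
  letI : Field F := Ideal.Quotient.field I
  haveI hFTF : Algebra.FiniteType ℤ F :=
    Algebra.FiniteType.of_surjective (Ideal.Quotient.mkₐ ℤ I)
      (Ideal.Quotient.mkₐ_surjective ℤ I)
  haveI : Module.Finite ℤ F := finite_of_finite_type_of_isJacobsonRing ℤ F
  haveI hFfin : Finite F := finite_of_field_of_moduleFiniteInt F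
  haveI : Finite (Fin n → F) := Pi.finite
  -- push to F
  set ψ : R →+* F := Ideal.Quotient.mk I with hψ_def
  set aF := Pmap (G := G) (n := n) ψ a' with haF_def
  set bF := Pmap (G := G) (n := n) ψ b' with hbF_def
  have hbaF : bF * aF = 1 := by rw [haF_def, hbF_def, ← Pmap_mul, hba', Pmap_one]
  have hleft : ∀ c, Tmap bF (Tmap aF c) = c := by
    intro c
    rw [← Tmap_mul, hbaF, Tmap_one]
  have hinj : Function.Injective (Tmap aF) :=
    Function.LeftInverse.injective hleft
  have hsurj : Function.Surjective (Tmap aF) :=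
    hG (Fin n → F) (Tmap aF) (Tmap_isCA aF) hinj
  have habF : aF * bF = 1 := by
    apply Tmap_injective
    funext c
    rw [Tmap_mul, Tmap_one]
    obtain ⟨c', rfl⟩ := hsurj c
    rw [hleft c']
  -- contradiction: the image of the nonzero entry is a unit but also zero
  set u' := a' * b' - 1 with hu'_def
  have hPu : Pmap (R.val : R →+* K) u' = d := by
    rw [hu'_def, Pmap_sub, Pmap_mul, hPa, hPb, Pmap_one, hd_def]
  have hval : ((u'.coeff g₀ i₀ j₀ : R) : K) = x := by
    have h1 : (Pmap (R.val : R →+* K) u').coeff g₀ = d.coeff g₀ := by rw [hPu]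
    rw [Pmap_apply] at h1
    have h2 := congrFun (congrFun h1 i₀) j₀
    rw [Matrix.map_apply] at h2
    exact h2
  have hunit : (u'.coeff g₀ i₀ j₀) * (⟨x⁻¹, hxinv_mem⟩ : R) = 1 := by
    apply Subtype.ext
    show ((u'.coeff g₀ i₀ j₀ : R) : K) * x⁻¹ = 1
    rw [hval]
    exact mul_inv_cancel₀ hx
  have hzero : ψ (u'.coeff g₀ i₀ j₀) = 0 := by
    have h0 : Pmap ψ u' = 0 := by
      rw [hu'_def, Pmap_sub, Pmap_mul, ← haF_def, ← hbF_def, habF, Pmap_one, sub_self]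
    have h1 : (Pmap ψ u').coeff g₀ = (0 : MonoidAlgebra (Matrix (Fin n) (Fin n) F) G).coeff g₀ := by rw [h0]
    rw [Pmap_apply, MonoidAlgebra.coeff_zero, Finsupp.zero_apply] at h1
    have h2 := congrFun (congrFun h1 i₀) j₀
    rw [Matrix.map_apply] at h2
    simpa using h2
  have hcontra : (1 : F) = 0 := by
    calc (1 : F) = ψ (u'.coeff g₀ i₀ j₀) * ψ (⟨x⁻¹, hxinv_mem⟩ : R) := by
          rw [← map_mul, hunit, map_one]
      _ = 0 := by rw [hzero, zero_mul]
  exact one_ne_zero hcontra
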